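/- Let d ≥ 3 and let I_Δ ⊂ S = k[x_0,…,x_d] be the Stanley–Reisner ideal of the cycle Δ on vertices x_0,…,x_d (so I_Δ is generated by the monomials x_i x_j for non-adjacent i,j in the cycle). Then Tor_i^S(I_Δ, k) is concentrated in degree i+2 for 0 ≤ i ≤ d-3, and Tor_{d-2}^S(I_Δ,k) is nonzero in degree d+1; in particular I_Δ satisfies N_{2,d-2} but not N_{2,d-1}. -/

import Mathlib

attribute [local instance] Classical.propDecidable

/-- An abstract simplicial complex on vertex type `V`. -/
structure SComplex (V : Type) [DecidableEq V] where
  faces : Set (Finset V)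
  empty_mem : ∅ ∈ faces
  down_closed : ∀ {s t : Finset V}, s ∈ faces → t ⊆ s → t ∈ faces

variable {V : Type} [DecidableEq V]

/-- The full subcomplex of `Δ` on a vertex set `W`: all faces contained in `W`. -/
def SComplex.fullSub (Δ : SComplex V) (W : Set V) : SComplex V where
  faces := {s | s ∈ Δ.faces ∧ ↑s ⊆ W}
  empty_mem := ⟨Δ.empty_mem, by simp⟩
  down_closed := fun hs hts =>
    ⟨Δ.down_closed hs.1 hts, Set.Subset.trans (Finset.coe_subset.mpr hts) hs.2⟩

variable [Fintype V] [LinearOrder V]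

/-- The space of simplicial `k`-chains of `Δ` supported on faces with `n` vertices
(i.e. of dimension `n-1`); for `n = 0` this is the span of the empty face, so the
resulting chain complex is the augmented (reduced) one. -/
abbrev SComplex.chain (k : Type) [Field k] (Δ : SComplex V) (n : ℕ) : Type :=
  {F : Finset V // F ∈ Δ.faces ∧ F.card = n} → k

/-- The simplicial boundary operator from chains on faces with `n+1` vertices to
chains on faces with `n` vertices, with the usual alternating signs determined by
the linear order on the vertices. -/
noncomputable def SComplex.bdry (k : Type) [Field k] (Δ : SComplex V) (n : ℕ) :
    Δ.chain k (n+1) →ₗ[k] Δ.chain k n where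
  toFun f G := ∑ v : V,
    if h : v ∉ G.1 ∧ insert v G.1 ∈ Δ.faces then
      (-1 : k) ^ (G.1.filter (fun u => u < v)).card *
        f ⟨insert v G.1, h.2, by rw [Finset.card_insert_of_notMem h.1, G.2.2]⟩
    else 0
  map_add' f g := by
    funext G
    show _ = (_ : k) + _
    rw [← Finset.sum_add_distrib]
    refine Finset.sum_congr rfl fun v _ => ?_
    by_cases h : v ∉ G.1 ∧ insert v G.1 ∈ Δ.faces
    · simp only [dif_pos h, Pi.add_apply]; ring
    · simp [dif_neg h]
  map_smul' c f := by
    funext G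
    show _ = c * _
    rw [Finset.mul_sum]
    refine Finset.sum_congr rfl fun v _ => ?_
    by_cases h : v ∉ G.1 ∧ insert v G.1 ∈ Δ.faces
    · simp only [dif_pos h, Pi.smul_apply, smul_eq_mul]; ring
    · simp [dif_neg h]

/-- The `i`-th reduced simplicial homology of `Δ` with coefficients in `k`:
cycles supported on faces with `i+1` vertices (dimension `i`) modulo boundaries.
(Since chains in degree 0 are spanned by the empty face, this is reduced homology.) -/
abbrev SComplex.redHomology (k : Type) [Field k] (Δ : SComplex V) (i : ℕ) :=
  LinearMap.ker (Δ.bdry k i) ⧸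
    Submodule.comap (LinearMap.ker (Δ.bdry k i)).subtype
      (LinearMap.range (Δ.bdry k (i+1)))

section
open Fin.CommRing

-- basic Fin facts
lemma fin_one_val (d : ℕ) (hd : 3 ≤ d) : ((1:Fin (d+1)) : ℕ) = 1 := by
  have h1 : ((1:Fin (d+1)) : ℕ) = 1 % (d+1) := rfl
  rw [h1, Nat.mod_eq_of_lt (by omega)]

lemma fin_succ_ne (d : ℕ) (hd : 3 ≤ d) (w : Fin (d+1)) : w + 1 ≠ w := by
  intro he
  have h0 : (1 : Fin (d+1)) = 0 := by
    have := congrArg (· - w) he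
    simpa [add_comm, add_sub_cancel_right] using this
  have h6 := congrArg Fin.val h0
  rw [fin_one_val d hd] at h6
  simp at h6

lemma fin_succ_ne_pred (d : ℕ) (hd : 3 ≤ d) (w : Fin (d+1)) : w + 1 ≠ w - 1 := by
  intro he
  have h2 : (1 : Fin (d+1)) + 1 = 0 := by
    have h5 : w + 1 + (1 - w) = w - 1 + (1 - w) := congrArg (· + (1 - w)) he
    have h3 : w + 1 + (1 - w) = 1 + 1 := by ring
    have h4 : w - 1 + (1 - w) = 0 := by ring
    rw [h3, h4] at h5; exact h5
  have h6 := congrArg Fin.val h2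
  rw [Fin.val_add, fin_one_val d hd, Nat.mod_eq_of_lt (by omega)] at h6
  simp at h6

lemma fin_two_step_ne (d : ℕ) (hd : 3 ≤ d) (w : Fin (d+1)) : w + 1 + 1 ≠ w := by
  intro he
  have h2 : (1 : Fin (d+1)) + 1 = 0 := by
    have h5 : w + 1 + 1 - w = w - w := congrArg (· - w) he
    have h3 : w + 1 + 1 - w = 1 + 1 := by ring
    have h4 : w - w = 0 := by ring
    rw [h3, h4] at h5; exact h5
  have h6 := congrArg Fin.val h2
  rw [Fin.val_add, fin_one_val d hd, Nat.mod_eq_of_lt (by omega)] at h6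
  simp at h6

-- edge characterization
lemma pair_mem_faces (d : ℕ) (hd : 3 ≤ d) (Δ : SComplex (Fin (d + 1)))
    (hΔ : Δ.faces = {s : Finset (Fin (d + 1)) |
        s = ∅ ∨ (∃ i, s = {i}) ∨ ∃ i : Fin (d + 1), s = {i, i + 1}})
    (v w : Fin (d+1)) (hvw : v ≠ w) :
    ({v, w} : Finset (Fin (d+1))) ∈ Δ.faces ↔ (v = w + 1 ∨ w = v + 1) := by
  constructor
  · intro hm
    rw [hΔ] at hm
    rcases hm with h | ⟨i, h⟩ | ⟨i, h⟩
    · exact absurd (h ▸ Finset.mem_insert_self v {w}) (by simp)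
    · have hv : v ∈ ({i} : Finset (Fin (d+1))) := h ▸ Finset.mem_insert_self v {w}
      have hw : w ∈ ({i} : Finset (Fin (d+1))) := h ▸ (by simp : w ∈ ({v, w} : Finset (Fin (d+1))))
      simp at hv hw; exact absurd (hv.trans hw.symm) hvw
    · have hv : v ∈ ({i, i+1} : Finset (Fin (d+1))) := h ▸ Finset.mem_insert_self v {w}
      have hw : w ∈ ({i, i+1} : Finset (Fin (d+1))) := h ▸ (by simp : w ∈ ({v, w} : Finset (Fin (d+1))))
      simp at hv hw
      rcases hv with rfl | rfl <;> rcases hw with rfl | rfl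
      · exact absurd rfl hvw
      · right; rfl
      · left; rfl
      · exact absurd rfl hvw
  · intro hm
    rw [hΔ]
    rcases hm with rfl | rfl
    · right; right; exact ⟨w, Finset.pair_comm _ _⟩
    · right; right; exact ⟨v, rfl⟩

-- unfolding bdry
lemma bdry_apply {V : Type} [DecidableEq V] [Fintype V] [LinearOrder V]
    (k : Type) [Field k] (Γ : SComplex V) (n : ℕ) (f : Γ.chain k (n+1))
    (G : {F : Finset V // F ∈ Γ.faces ∧ F.card = n}) :
    Γ.bdry k n f G = ∑ v : V,
      if h : v ∉ G.1 ∧ insert v G.1 ∈ Γ.faces then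
        (-1 : k) ^ (G.1.filter (fun u => u < v)).card *
          f ⟨insert v G.1, h.2, by rw [Finset.card_insert_of_notMem h.1, G.2.2]⟩
      else 0 := rfl

-- reduction of the sum to two terms at a singleton, for complexes with only "cycle edges"
lemma bdry_singleton (d : ℕ) (hd : 3 ≤ d) (k : Type) [Field k]
    (Γ : SComplex (Fin (d+1)))
    (hE : ∀ v w : Fin (d+1), v ≠ w → ({v, w} : Finset (Fin (d+1))) ∈ Γ.faces →
      v = w + 1 ∨ w = v + 1)
    (f : Γ.chain k 2) (w : Fin (d+1)) (hw : ({w} : Finset (Fin (d+1))) ∈ Γ.faces)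
    (hc : ({w} : Finset (Fin (d+1))).card = 1) :
    Γ.bdry k 1 f ⟨{w}, hw, hc⟩ =
      (if h : (w+1) ∉ ({w} : Finset (Fin (d+1))) ∧
          insert (w+1) ({w} : Finset (Fin (d+1))) ∈ Γ.faces then
        (if w < w + 1 then (-1:k) else 1) *
          f ⟨insert (w+1) {w}, h.2, by rw [Finset.card_insert_of_notMem h.1, hc]⟩
      else 0)
      + (if h : (w-1) ∉ ({w} : Finset (Fin (d+1))) ∧
          insert (w-1) ({w} : Finset (Fin (d+1))) ∈ Γ.faces then
        (if w < w - 1 then (-1:k) else 1) *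
          f ⟨insert (w-1) {w}, h.2, by rw [Finset.card_insert_of_notMem h.1, hc]⟩
      else 0) := by
  have hsum : Γ.bdry k 1 f ⟨{w}, hw, hc⟩ = ∑ v : Fin (d+1),
      (if h : v ∉ ({w} : Finset (Fin (d+1))) ∧
          insert v ({w} : Finset (Fin (d+1))) ∈ Γ.faces then
        (if w < v then (-1:k) else 1) *
          f ⟨insert v {w}, h.2, by rw [Finset.card_insert_of_notMem h.1, hc]⟩
      else 0) := by
    rw [bdry_apply]
    refine Finset.sum_congr rfl fun v _ => ?_
    by_cases h : v ∉ ({w} : Finset (Fin (d+1))) ∧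
        insert v ({w} : Finset (Fin (d+1))) ∈ Γ.faces
    · rw [dif_pos h, dif_pos h]
      congr 1
      rw [Finset.filter_singleton]
      by_cases hlt : w < v
      · rw [if_pos hlt, if_pos hlt]; simp
      · rw [if_neg hlt, if_neg hlt]; simp
    · rw [dif_neg h, dif_neg h]
  rw [hsum]
  refine Fintype.sum_eq_add (w+1) (w-1) (fin_succ_ne_pred d hd w) ?_
  intro v ⟨hv1, hv2⟩
  rw [dif_neg]
  rintro ⟨hnm, hmem⟩
  have hvw : v ≠ w := by rintro rfl; exact hnm (Finset.mem_singleton_self v)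
  rcases hE v w hvw hmem with h | h
  · exact hv1 h
  · exact hv2 (by rw [h]; ring)

-- subsingleton homology from trivial kernel
lemma redHom_subsingleton {V : Type} [DecidableEq V] [Fintype V] [LinearOrder V]
    (k : Type) [Field k] (Γ : SComplex V) (n : ℕ)
    (h : ∀ f : Γ.chain k (n+1), Γ.bdry k n f = 0 → f = 0) :
    Subsingleton (Γ.redHomology k n) := by
  haveI : Subsingleton (LinearMap.ker (Γ.bdry k n)) :=
    ⟨fun a b => Subtype.ext (by
      rw [h a.1 (LinearMap.mem_ker.mp a.2), h b.1 (LinearMap.mem_ker.mp b.2)])⟩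
  exact Quotient.instSubsingletonQuotient _

-- faces of the cycle have at most 2 vertices
lemma face_card_le_two (d : ℕ) (Δ : SComplex (Fin (d + 1)))
    (hΔ : Δ.faces = {s : Finset (Fin (d + 1)) |
        s = ∅ ∨ (∃ i, s = {i}) ∨ ∃ i : Fin (d + 1), s = {i, i + 1}})
    (F : Finset (Fin (d+1))) (hF : F ∈ Δ.faces) : F.card ≤ 2 := by
  rw [hΔ] at hF
  rcases hF with rfl | ⟨i, rfl⟩ | ⟨i, rfl⟩
  · simp
  · simp
  · exact le_trans (Finset.card_insert_le _ _) (by simp)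

-- kernel of ∂₁ on a proper full subcomplex of the cycle is trivial
lemma ker_bdry_one_triv (d : ℕ) (hd : 3 ≤ d) (k : Type) [Field k]
    (Δ : SComplex (Fin (d + 1)))
    (hΔ : Δ.faces = {s : Finset (Fin (d + 1)) |
        s = ∅ ∨ (∃ i, s = {i}) ∨ ∃ i : Fin (d + 1), s = {i, i + 1}})
    (W : Finset (Fin (d+1))) (v0 : Fin (d+1)) (hv0 : v0 ∉ W)
    (f : (Δ.fullSub ↑W).chain k 2) (hf : (Δ.fullSub ↑W).bdry k 1 f = 0) : f = 0 := by
  have hE : ∀ v w : Fin (d+1), v ≠ w → ({v, w} : Finset (Fin (d+1))) ∈ (Δ.fullSub (↑W : Set (Fin (d+1)))).faces →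
      v = w + 1 ∨ w = v + 1 := fun v w hvw hm =>
    (pair_mem_faces d hd Δ hΔ v w hvw).mp hm.1
  have claim : ∀ t : ℕ, ∀ u : Fin (d+1), u = v0 + (t : Fin (d+1)) →
      ∀ (h2 : ({u, u+1} : Finset (Fin (d+1))) ∈ (Δ.fullSub (↑W : Set (Fin (d+1)))).faces)
        (hc : ({u, u+1} : Finset (Fin (d+1))).card = 2),
      f ⟨{u, u+1}, h2, hc⟩ = 0 := by
    intro t
    induction t with
    | zero =>
      intro u hu h2 _
      exfalso
      apply hv0
      have : u ∈ W := by
        have := h2.2 (Finset.mem_coe.mpr (Finset.mem_insert_self u {u+1}))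
        exact this
      rwa [hu, Nat.cast_zero, add_zero] at this
    | succ t ih =>
      intro w hwdef h2 hc
      -- w = v0 + t + 1
      have hw1 : ({w} : Finset (Fin (d+1))) ∈ (Δ.fullSub (↑W : Set (Fin (d+1)))).faces :=
        (Δ.fullSub (↑W : Set (Fin (d+1)))).down_closed h2 (by simp)
      have hcc : ({w} : Finset (Fin (d+1))).card = 1 := Finset.card_singleton w
      have hzero : (Δ.fullSub (↑W : Set (Fin (d+1)))).bdry k 1 f ⟨{w}, hw1, hcc⟩ = 0 := by rw [hf]; rfl
      rw [bdry_singleton d hd k _ hE f w hw1 hcc] at hzero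
      -- the (w-1) term vanishes by the inductive hypothesis
      have hterm2 : (if h : (w-1) ∉ ({w} : Finset (Fin (d+1))) ∧
          insert (w-1) ({w} : Finset (Fin (d+1))) ∈ (Δ.fullSub (↑W : Set (Fin (d+1)))).faces then
        (if w < w - 1 then (-1:k) else 1) *
          f ⟨insert (w-1) {w}, h.2, by rw [Finset.card_insert_of_notMem h.1, hcc]⟩
      else 0) = 0 := by
        by_cases h : (w-1) ∉ ({w} : Finset (Fin (d+1))) ∧
            insert (w-1) ({w} : Finset (Fin (d+1))) ∈ (Δ.fullSub (↑W : Set (Fin (d+1)))).faces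
        · rw [dif_pos h]
          have hueq : w - 1 = v0 + (t : Fin (d+1)) := by
            rw [hwdef]; push_cast; ring
          have hset : (insert (w-1) ({w} : Finset (Fin (d+1))))
              = {w - 1, (w-1) + 1} := by
            congr 1
            rw [sub_add_cancel]
          have : f ⟨insert (w-1) {w}, h.2, by rw [Finset.card_insert_of_notMem h.1, hcc]⟩ = 0 := by
            have h2' : ({w - 1, (w-1) + 1} : Finset (Fin (d+1))) ∈ (Δ.fullSub (↑W : Set (Fin (d+1)))).faces := hset ▸ h.2
            have hc' : ({w - 1, (w-1) + 1} : Finset (Fin (d+1))).card = 2 := by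
              rw [← hset, Finset.card_insert_of_notMem h.1, hcc]
            have := ih (w-1) hueq h2' hc'
            rw [← this]
            congr 1
            exact Subtype.ext hset
          rw [this, mul_zero]
        · rw [dif_neg h]
      rw [hterm2, add_zero] at hzero
      -- the (w+1) term is the one we want
      have hcond : (w+1) ∉ ({w} : Finset (Fin (d+1))) ∧
          insert (w+1) ({w} : Finset (Fin (d+1))) ∈ (Δ.fullSub (↑W : Set (Fin (d+1)))).faces := by
        constructor
        · simp [fin_succ_ne d hd w]
        · have : (insert (w+1) ({w} : Finset (Fin (d+1)))) = {w, w+1} :=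
            Finset.pair_comm _ _
          rw [this]; exact h2
      rw [dif_pos hcond] at hzero
      have hsign : (if w < w + 1 then (-1:k) else 1) ≠ 0 := by
        split_ifs <;> simp
      have hfz := (mul_eq_zero.mp hzero).resolve_left hsign
      rw [← hfz]
      congr 1
      exact Subtype.ext (Finset.pair_comm _ _).symm
  -- now conclude f = 0
  funext G
  rw [Pi.zero_apply]
  obtain ⟨F, hF, hFc⟩ := G
  have hF' : F ∈ Δ.faces := hF.1
  rw [hΔ] at hF'
  rcases hF' with rfl | ⟨i, rfl⟩ | ⟨i, hFi⟩
  · simp at hFc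
  · simp at hFc
  · have hi : i = v0 + (((i - v0).val : ℕ) : Fin (d+1)) := by
      rw [Fin.cast_val_eq_self]; ring
    have := claim (i - v0).val i hi (hFi ▸ hF) (hFi ▸ hFc)
    show f ⟨F, hF, hFc⟩ = 0
    rw [← this]
    congr 1
    exact Subtype.ext hFi

noncomputable def Tplus (d : ℕ) (k : Type) [Field k] (Δ : SComplex (Fin (d+1)))
    (f : Δ.chain k 2) (w v : Fin (d+1)) : k :=
  if h : v ∉ ({w} : Finset (Fin (d+1))) ∧
      insert v ({w} : Finset (Fin (d+1))) ∈ Δ.faces then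
    (if w < v then (-1:k) else 1) *
      f ⟨insert v {w}, h.2, by rw [Finset.card_insert_of_notMem h.1, Finset.card_singleton]⟩
  else 0

lemma bdry_singleton' (d : ℕ) (hd : 3 ≤ d) (k : Type) [Field k]
    (Γ : SComplex (Fin (d+1)))
    (hE : ∀ v w : Fin (d+1), v ≠ w → ({v, w} : Finset (Fin (d+1))) ∈ Γ.faces →
      v = w + 1 ∨ w = v + 1)
    (f : Γ.chain k 2) (w : Fin (d+1)) (hw : ({w} : Finset (Fin (d+1))) ∈ Γ.faces) :
    Γ.bdry k 1 f ⟨{w}, hw, Finset.card_singleton w⟩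
      = Tplus d k Γ f w (w+1) + Tplus d k Γ f w (w-1) :=
  bdry_singleton d hd k Γ hE f w hw (Finset.card_singleton w)

lemma tplus_cancel (d : ℕ) (hd : 3 ≤ d) (k : Type) [Field k]
    (Δ : SComplex (Fin (d+1))) (f : Δ.chain k 2) (w : Fin (d+1)) :
    Tplus d k Δ f w (w+1) + Tplus d k Δ f (w+1) w = 0 := by
  unfold Tplus
  have hpair : (insert w ({w+1} : Finset (Fin (d+1))))
      = insert (w+1) ({w} : Finset (Fin (d+1))) := Finset.pair_comm w (w+1)
  have hne : w ≠ w + 1 := fun h => fin_succ_ne d hd w h.symm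
  by_cases hc1 : (w+1) ∉ ({w} : Finset (Fin (d+1))) ∧
      insert (w+1) ({w} : Finset (Fin (d+1))) ∈ Δ.faces
  · have hc2 : w ∉ ({w+1} : Finset (Fin (d+1))) ∧
        insert w ({w+1} : Finset (Fin (d+1))) ∈ Δ.faces :=
      ⟨Finset.notMem_singleton.mpr hne, by rw [hpair]; exact hc1.2⟩
    rw [dif_pos hc1, dif_pos hc2]
    have hAB : (⟨insert (w+1) ({w} : Finset (Fin (d+1))), hc1.2,
          by rw [Finset.card_insert_of_notMem hc1.1, Finset.card_singleton]⟩ :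
          {F : Finset (Fin (d+1)) // F ∈ Δ.faces ∧ F.card = 2})
        = ⟨insert w ({w+1} : Finset (Fin (d+1))), hc2.2,
          by rw [Finset.card_insert_of_notMem hc2.1, Finset.card_singleton]⟩ :=
      Subtype.ext hpair.symm
    rw [hAB]
    rcases lt_or_gt_of_ne hne with hlt | hgt
    · rw [if_pos hlt, if_neg (asymm hlt)]; ring
    · rw [if_neg (asymm hgt), if_pos hgt]; ring
  · have hc2 : ¬(w ∉ ({w+1} : Finset (Fin (d+1))) ∧
        insert w ({w+1} : Finset (Fin (d+1))) ∈ Δ.faces) := by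
      intro h
      exact hc1 ⟨Finset.notMem_singleton.mpr (fin_succ_ne d hd w), by rw [← hpair]; exact h.2⟩
    rw [dif_neg hc1, dif_neg hc2, add_zero]

lemma singleton_mem_faces (d : ℕ) (Δ : SComplex (Fin (d + 1)))
    (hΔ : Δ.faces = {s : Finset (Fin (d + 1)) |
        s = ∅ ∨ (∃ i, s = {i}) ∨ ∃ i : Fin (d + 1), s = {i, i + 1}})
    (w : Fin (d+1)) : ({w} : Finset (Fin (d+1))) ∈ Δ.faces := by
  rw [hΔ]; exact Or.inr (Or.inl ⟨w, rfl⟩)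

lemma vert_bijective (d : ℕ) (hd : 3 ≤ d) (Δ : SComplex (Fin (d + 1)))
    (hΔ : Δ.faces = {s : Finset (Fin (d + 1)) |
        s = ∅ ∨ (∃ i, s = {i}) ∨ ∃ i : Fin (d + 1), s = {i, i + 1}}) :
    Function.Bijective (fun w : Fin (d+1) =>
      (⟨{w}, singleton_mem_faces d Δ hΔ w, Finset.card_singleton w⟩ :
        {F : Finset (Fin (d+1)) // F ∈ Δ.faces ∧ F.card = 1})) := by
  constructor
  · intro a b hab
    exact Finset.singleton_injective (congrArg Subtype.val hab)
  · rintro ⟨F, hF, hc⟩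
    have hF' := hF
    rw [hΔ] at hF'
    rcases hF' with rfl | ⟨i, rfl⟩ | ⟨i, rfl⟩
    · simp at hc
    · exact ⟨i, Subtype.ext rfl⟩
    · rw [Finset.card_insert_of_notMem
        (Finset.notMem_singleton.mpr (fun h => fin_succ_ne d hd i h.symm)),
        Finset.card_singleton] at hc
      omega

lemma edge_mem_faces (d : ℕ) (Δ : SComplex (Fin (d + 1)))
    (hΔ : Δ.faces = {s : Finset (Fin (d + 1)) |
        s = ∅ ∨ (∃ i, s = {i}) ∨ ∃ i : Fin (d + 1), s = {i, i + 1}})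
    (w : Fin (d+1)) : ({w, w+1} : Finset (Fin (d+1))) ∈ Δ.faces := by
  rw [hΔ]; exact Or.inr (Or.inr ⟨w, rfl⟩)

lemma edge_card (d : ℕ) (hd : 3 ≤ d) (w : Fin (d+1)) :
    ({w, w+1} : Finset (Fin (d+1))).card = 2 := by
  rw [Finset.card_insert_of_notMem
    (Finset.notMem_singleton.mpr (fun h => fin_succ_ne d hd w h.symm)),
    Finset.card_singleton]

lemma edge_bijective (d : ℕ) (hd : 3 ≤ d) (Δ : SComplex (Fin (d + 1)))
    (hΔ : Δ.faces = {s : Finset (Fin (d + 1)) |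
        s = ∅ ∨ (∃ i, s = {i}) ∨ ∃ i : Fin (d + 1), s = {i, i + 1}}) :
    Function.Bijective (fun w : Fin (d+1) =>
      (⟨{w, w+1}, edge_mem_faces d Δ hΔ w, edge_card d hd w⟩ :
        {F : Finset (Fin (d+1)) // F ∈ Δ.faces ∧ F.card = 2})) := by
  constructor
  · intro a b hab
    have hva : ({a, a+1} : Finset (Fin (d+1))) = {b, b+1} := congrArg Subtype.val hab
    have ha : a ∈ ({b, b+1} : Finset (Fin (d+1))) := hva ▸ Finset.mem_insert_self a {a+1}
    rcases Finset.mem_insert.mp ha with h | h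
    · exact h
    · rw [Finset.mem_singleton] at h
      have hb : b ∈ ({a, a+1} : Finset (Fin (d+1))) := hva ▸ Finset.mem_insert_self b {b+1}
      rcases Finset.mem_insert.mp hb with h' | h'
      · exfalso; rw [h'] at h; exact fin_succ_ne d hd a h.symm
      · rw [Finset.mem_singleton] at h'
        exfalso; rw [h'] at h; exact fin_two_step_ne d hd a h.symm
  · rintro ⟨F, hF, hc⟩
    have hF' := hF
    rw [hΔ] at hF'
    rcases hF' with rfl | ⟨i, rfl⟩ | ⟨i, rfl⟩
    · simp at hc
    · simp at hc
    · exact ⟨i, Subtype.ext rfl⟩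

lemma sum_bdry_zero (d : ℕ) (hd : 3 ≤ d) (k : Type) [Field k]
    (Δ : SComplex (Fin (d + 1)))
    (hΔ : Δ.faces = {s : Finset (Fin (d + 1)) |
        s = ∅ ∨ (∃ i, s = {i}) ∨ ∃ i : Fin (d + 1), s = {i, i + 1}})
    (f : Δ.chain k 2) :
    ∑ x : {F : Finset (Fin (d+1)) // F ∈ Δ.faces ∧ F.card = 1}, Δ.bdry k 1 f x = 0 := by
  have hE : ∀ v w : Fin (d+1), v ≠ w → ({v, w} : Finset (Fin (d+1))) ∈ Δ.faces →
      v = w + 1 ∨ w = v + 1 := fun v w hvw hm => (pair_mem_faces d hd Δ hΔ v w hvw).mp hm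
  have heq : ∑ w : Fin (d+1), (Tplus d k Δ f w (w+1) + Tplus d k Δ f w (w-1))
      = ∑ x : {F : Finset (Fin (d+1)) // F ∈ Δ.faces ∧ F.card = 1}, Δ.bdry k 1 f x :=
    Fintype.sum_bijective _ (vert_bijective d hd Δ hΔ) _ _
      (fun w => (bdry_singleton' d hd k Δ hE f w (singleton_mem_faces d Δ hΔ w)).symm)
  rw [← heq, Finset.sum_add_distrib]
  have h2 : ∑ w : Fin (d+1), Tplus d k Δ f w (w-1)
      = ∑ w : Fin (d+1), Tplus d k Δ f (w+1) (w+1-1) := by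
    rw [← Equiv.sum_comp (Equiv.addRight (1 : Fin (d+1)))
      (fun w => Tplus d k Δ f w (w-1))]
    rfl
  rw [h2]
  have h3 : ∀ w : Fin (d+1), Tplus d k Δ f (w+1) (w+1-1) = Tplus d k Δ f (w+1) w := by
    intro w; rw [add_sub_cancel_right]
  rw [Finset.sum_congr rfl (fun w _ => h3 w), ← Finset.sum_add_distrib]
  exact Finset.sum_eq_zero fun w _ => tplus_cancel d hd k Δ f w

end

/-- let `Δ` be the simplicial cycle on the `d+1` vertices
`x_0, …, x_d` (`d ≥ 3`), so that `I_Δ ⊂ S = k[x_0, …, x_d]` is generated by the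
monomials `x_i x_j` for non-adjacent `i, j`. Then `Tor_i^S(I_Δ, k)` is
concentrated in degree `i+2` for `0 ≤ i ≤ d-3`, while `Tor_{d-2}^S(I_Δ, k)` is
nonzero in degree `d+1`; in particular `I_Δ` satisfies `N_{2,d-2}` but not
`N_{2,d-1}`. Via Hochster's formula, `Tor_i^S(I_Δ,k)` in squarefree multidegree
`m` equals `H̃_{deg m - i - 2}(|m|; k)`, so the statement reads: for `i ≤ d-3`
every full subcomplex `Δ|_W` with `|W| ≠ i+2` has
`H̃_{|W|-i-2}(Δ|_W; k) = 0`, while `H̃_{(d+1)-(d-2)-2}(Δ; k) = H̃₁(Δ; k) ≠ 0`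
(whence the nonzero `Tor_{d-2}` in degree `d+1`). -/
theorem statement_10 (k : Type) [Field k] (d : ℕ) (hd : 3 ≤ d)
    (Δ : SComplex (Fin (d + 1)))
    (hΔ : Δ.faces = {s : Finset (Fin (d + 1)) |
        s = ∅ ∨ (∃ i, s = {i}) ∨ ∃ i : Fin (d + 1), s = {i, i + 1}}) :
    (∀ i : ℕ, i ≤ d - 3 → ∀ W : Finset (Fin (d + 1)),
        i + 2 ≤ W.card → W.card ≠ i + 2 →
        Subsingleton ((Δ.fullSub ↑W).redHomology k (W.card - i - 2))) ∧
      ¬ Subsingleton (Δ.redHomology k 1) := by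
  constructor
  · intro i hi W hge hne
    rcases Nat.lt_or_ge (W.card - i - 2) 2 with h1 | h2
    · have hn1 : W.card - i - 2 = 1 := by omega
      rw [hn1]
      have hlt : W.card < d + 1 := by omega
      have hex : ∃ v0, v0 ∉ W := by
        by_contra hcon
        push_neg at hcon
        have huniv : W = Finset.univ := Finset.eq_univ_iff_forall.mpr hcon
        rw [huniv, Finset.card_univ, Fintype.card_fin] at hlt
        omega
      obtain ⟨v0, hv0⟩ := hex
      exact redHom_subsingleton k _ 1 (fun f hf => ker_bdry_one_triv d hd k Δ hΔ W v0 hv0 f hf)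
    · apply redHom_subsingleton
      intro f _
      funext G
      rw [Pi.zero_apply]
      exact absurd G.2.2 (by have := face_card_le_two d Δ hΔ G.1 G.2.1.1; omega)
  · intro hS
    have hchain3 : ∀ y : Δ.chain k 3, y = 0 := by
      intro y
      funext G
      exact absurd G.2.2 (by have := face_card_le_two d Δ hΔ G.1 G.2.1; omega)
    have htop := Submodule.Quotient.subsingleton_iff.mp hS
    have hker : LinearMap.ker (Δ.bdry k 1) = ⊥ := by
      rw [Submodule.eq_bot_iff]
      intro x hx
      have hmem : (⟨x, hx⟩ : LinearMap.ker (Δ.bdry k 1)) ∈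
          Submodule.comap (LinearMap.ker (Δ.bdry k 1)).subtype
            (LinearMap.range (Δ.bdry k 2)) := htop ▸ Submodule.mem_top
      rw [Submodule.mem_comap] at hmem
      obtain ⟨y, hy⟩ := hmem
      rw [hchain3 y, map_zero] at hy
      exact hy.symm
    have hinj : Function.Injective (Δ.bdry k 1) := LinearMap.ker_eq_bot.mp hker
    let e : {F : Finset (Fin (d+1)) // F ∈ Δ.faces ∧ F.card = 2}
        ≃ {F : Finset (Fin (d+1)) // F ∈ Δ.faces ∧ F.card = 1} :=
      (Equiv.ofBijective _ (edge_bijective d hd Δ hΔ)).symm.trans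
        (Equiv.ofBijective _ (vert_bijective d hd Δ hΔ))
    let ι := LinearEquiv.funCongrLeft k k e
    haveI : FiniteDimensional k (Δ.chain k 1) := by infer_instance
    have hginj : Function.Injective ((Δ.bdry k 1) ∘ₗ ι.toLinearMap) := by
      rw [LinearMap.coe_comp]
      exact hinj.comp ι.injective
    have hgsurj := LinearMap.injective_iff_surjective.mp hginj
    have hbsurj : Function.Surjective (Δ.bdry k 1) := by
      intro y
      obtain ⟨x, hx⟩ := hgsurj y
      exact ⟨ι x, hx⟩
    obtain ⟨f, hfeq⟩ := hbsurj
      (Pi.single ⟨{0}, singleton_mem_faces d Δ hΔ 0, Finset.card_singleton 0⟩ 1)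
    have h1 := sum_bdry_zero d hd k Δ hΔ f
    rw [hfeq] at h1
    simp [Pi.single_apply] at h1
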